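/- Let F(i,j) be the double-recurrence Fibonacci numbers. Then for all m ∈ ℕ, 5·∑_{i=0}^{m} ∑_{j=0}^{m} F(i,j) = 4·(m·L_{m+3} − L_{m+4} + 2·F_{m+2}) − 5·F_{m+2} + 25, where L_k is the k-th Lucas number and F_k the k-th Fibonacci number. -/
import Mathlib


/-- Double-recurrence Fibonacci numbers. -/
def dF : ℕ → ℕ → ℕ
  | m, 0 => Nat.fib m
  | m, 1 => Nat.fib (m + 1)
  | 0, n => Nat.fib n
  | 1, n => Nat.fib (n + 1)
  | m + 2, n + 2 => dF (m + 1) (n + 1) + dF m n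


/-- Lucas numbers. -/
def luc : ℕ → ℕ
  | 0 => 2
  | 1 => 1
  | n + 2 => luc (n + 1) + luc n

lemma dF_zero (n : ℕ) : dF 0 n = Nat.fib n := by
  match n with
  | 0 => simp [dF]
  | 1 => simp [dF]
  | n + 2 => simp [dF]

lemma dF_one (n : ℕ) : dF 1 n = Nat.fib (n + 1) := by
  match n with
  | 0 => simp [dF]
  | 1 => simp [dF]
  | n + 2 => simp [dF]

lemma dF_symm (m n : ℕ) : dF m n = dF n m := by
  induction m, n using dF.induct with
  | case1 m => simp [dF, dF_zero]
  | case2 m => simp [dF, dF_one]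
  | case3 n _ _ => simp [dF, dF_zero]
  | case4 n _ _ => simp [dF, dF_one]
  | case5 m n ih2 ih1 =>
      show dF (m + 2) (n + 2) = dF (n + 2) (m + 2)
      simp [dF, ih1, ih2]

lemma dF_diag (m : ℕ) : dF m m = Nat.fib m := by
  induction m using Nat.twoStepInduction with
  | zero => simp [dF]
  | one => simp [dF]
  | more n ih1 ih2 =>
      show dF (n + 2) (n + 2) = Nat.fib (n + 2)
      simp only [dF, ih1, ih2, Nat.fib_add_two]
      omega

lemma luc_as_fib (n : ℕ) : (luc n : ℤ) = 2 * Nat.fib (n + 1) - Nat.fib n := by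
  induction n using Nat.twoStepInduction with
  | zero => simp [luc]
  | one => simp [luc]
  | more n ih1 ih2 =>
      show (luc (n + 2) : ℤ) = _
      rw [luc]
      push_cast [Nat.fib_add_two] at *
      linarith

lemma Tsum (m : ℕ) : 5 * ∑ j ∈ Finset.range (m + 1), (dF (m + 1) j : ℤ) =
    m * (2 * Nat.fib m + 6 * Nat.fib (m + 1)) + 2 * Nat.fib m + 5 * Nat.fib (m + 1) := by
  induction m using Nat.twoStepInduction with
  | zero => simp [dF]
  | one => norm_num [Finset.sum_range_succ, dF]
  | more m ih1 ih2 =>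
      have e1 : ∑ j ∈ Finset.range (m + 2 + 1), (dF (m + 2 + 1) j : ℤ) =
          (∑ j ∈ Finset.range (m + 1), (dF (m + 3) (j + 2) : ℤ)) +
            (dF (m + 3) 1 : ℤ) + (dF (m + 3) 0 : ℤ) := by
        rw [Finset.sum_range_succ', Finset.sum_range_succ']
      have e2 : ∀ j : ℕ, (dF (m + 3) (j + 2) : ℤ) =
          (dF (m + 2) (j + 1) : ℤ) + (dF (m + 1) j : ℤ) := by
        intro j
        show ((dF (m + 1 + 2) (j + 2) : ℕ) : ℤ) = _
        rw [dF]; push_cast; ring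
      have e3 : ∑ j ∈ Finset.range (m + 1 + 1), (dF (m + 2) j : ℤ) =
          (∑ j ∈ Finset.range (m + 1), (dF (m + 2) (j + 1) : ℤ)) + (dF (m + 2) 0 : ℤ) := by
        rw [Finset.sum_range_succ']
      have h0 : (dF (m + 3) 0 : ℤ) = Nat.fib (m + 3) := by simp [dF]
      have h1 : (dF (m + 3) 1 : ℤ) = Nat.fib (m + 4) := by simp [dF]
      have h2 : (dF (m + 2) 0 : ℤ) = Nat.fib (m + 2) := by simp [dF]
      rw [e1]
      simp only [e2, Finset.sum_add_distrib]
      have hs : (∑ j ∈ Finset.range (m + 1), (dF (m + 2) (j + 1) : ℤ)) =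
          (∑ j ∈ Finset.range (m + 1 + 1), (dF (m + 2) j : ℤ)) - (dF (m + 2) 0 : ℤ) := by
        rw [e3]; ring
      rw [hs, h0, h1, h2]
      have f4 : (Nat.fib (m + 4) : ℤ) = Nat.fib (m + 3) + Nat.fib (m + 2) := by
        rw [show m + 4 = m + 2 + 2 from rfl, Nat.fib_add_two]; push_cast; ring
      have f3 : (Nat.fib (m + 3) : ℤ) = Nat.fib (m + 2) + Nat.fib (m + 1) := by
        rw [show m + 3 = m + 1 + 2 from rfl, Nat.fib_add_two]; push_cast; ring
      have f2 : (Nat.fib (m + 2) : ℤ) = Nat.fib (m + 1) + Nat.fib m := by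
        rw [Nat.fib_add_two]; push_cast; ring
      simp only [show m + 1 + 1 = m + 2 from rfl, show m + 2 + 1 = m + 3 from rfl] at ih2 ⊢
      push_cast at ih1 ih2 ⊢
      linear_combination ih1 + ih2 + 5 * f4 - (6 * (m : ℤ) + 7) * f3 - (2 * (m : ℤ) + 2) * f2

theorem stmt_11 : ∀ m : ℕ,
    5 * ∑ i ∈ Finset.range (m + 1), ∑ j ∈ Finset.range (m + 1), (dF i j : ℤ) =
      4 * ((m : ℤ) * luc (m + 3) - luc (m + 4) + 2 * Nat.fib (m + 2)) -
        5 * Nat.fib (m + 2) + 25 := by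
  intro m
  induction m with
  | zero => norm_num [Finset.sum_range_succ, dF, luc]
  | succ m ih =>
      have split : ∑ i ∈ Finset.range (m + 2), ∑ j ∈ Finset.range (m + 2), (dF i j : ℤ) =
          (∑ i ∈ Finset.range (m + 1), ∑ j ∈ Finset.range (m + 1), (dF i j : ℤ)) +
            (∑ i ∈ Finset.range (m + 1), (dF i (m + 1) : ℤ)) +
            (∑ j ∈ Finset.range (m + 1), (dF (m + 1) j : ℤ)) +
            (dF (m + 1) (m + 1) : ℤ) := by
        rw [Finset.sum_range_succ]
        rw [Finset.sum_range_succ (f := fun j => (dF (m + 1) j : ℤ))]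
        have : ∀ i ∈ Finset.range (m + 1),
            ∑ j ∈ Finset.range (m + 2), (dF i j : ℤ) =
              (∑ j ∈ Finset.range (m + 1), (dF i j : ℤ)) + (dF i (m + 1) : ℤ) := by
          intro i _
          rw [Finset.sum_range_succ]
        rw [Finset.sum_congr rfl this, Finset.sum_add_distrib]
        ring
      have symmsum : (∑ i ∈ Finset.range (m + 1), (dF i (m + 1) : ℤ)) =
          ∑ i ∈ Finset.range (m + 1), (dF (m + 1) i : ℤ) := by
        apply Finset.sum_congr rfl
        intro i _
        rw [dF_symm]
      have hT := Tsum m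
      have hdiag : (dF (m + 1) (m + 1) : ℤ) = Nat.fib (m + 1) := by rw [dF_diag]
      rw [split, symmsum, hdiag]
      have lucfib3 : (luc (m + 3) : ℤ) = 2 * Nat.fib (m + 4) - Nat.fib (m + 3) := luc_as_fib _
      have lucfib4 : (luc (m + 4) : ℤ) = 2 * Nat.fib (m + 5) - Nat.fib (m + 4) := luc_as_fib _
      have lucfib5 : (luc (m + 5) : ℤ) = 2 * Nat.fib (m + 6) - Nat.fib (m + 5) := luc_as_fib _
      have f6 : (Nat.fib (m + 6) : ℤ) = Nat.fib (m + 5) + Nat.fib (m + 4) := by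
        rw [show m + 6 = m + 4 + 2 from rfl, Nat.fib_add_two]; push_cast; ring
      have f5 : (Nat.fib (m + 5) : ℤ) = Nat.fib (m + 4) + Nat.fib (m + 3) := by
        rw [show m + 5 = m + 3 + 2 from rfl, Nat.fib_add_two]; push_cast; ring
      have f4 : (Nat.fib (m + 4) : ℤ) = Nat.fib (m + 3) + Nat.fib (m + 2) := by
        rw [show m + 4 = m + 2 + 2 from rfl, Nat.fib_add_two]; push_cast; ring
      have f3 : (Nat.fib (m + 3) : ℤ) = Nat.fib (m + 2) + Nat.fib (m + 1) := by
        rw [show m + 3 = m + 1 + 2 from rfl, Nat.fib_add_two]; push_cast; ring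
      have f2 : (Nat.fib (m + 2) : ℤ) = Nat.fib (m + 1) + Nat.fib m := by
        rw [Nat.fib_add_two]; push_cast; ring
      simp only [show m + 1 + 1 = m + 2 from rfl, show m + 1 + 2 = m + 3 from rfl,
        show m + 1 + 3 = m + 4 from rfl, show m + 1 + 4 = m + 5 from rfl] at ih hT ⊢
      push_cast at ih hT ⊢
      linear_combination ih + 2 * hT + (4 * (m : ℤ)) * lucfib3 - (4 * (m : ℤ) + 8) * lucfib4 +
        4 * lucfib5 + 8 * f6 - (8 * (m : ℤ) + 12) * f5 + (4 * (m : ℤ) + 4) * f4 -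
        (8 * (m : ℤ) + 11) * f3 - (4 * (m : ℤ) + 4) * f2
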